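/- Let (X, 𝔄) be a measurable space, μ a probability measure on X, d ≥ 1, and K ≥ 1. If λ = 1/(K+1), then for every bounded measurable f : X → ℝ^d the additional risk of the RINCE loss vanishes: ∫_{X^{K+2}} [ −(1−λ) exp(⟨f(x), f(x⁺)⟩) + λ ∑_{k=1}^K exp(⟨f(x), f(x⁻_k)⟩) ] dμ^{⊗(K+2)} = 0. Hence the additional risk Δℛ(ℒ_RINCE; f) is the constant 0 independently of f, so RINCE with λ = 1/(K+1) satisfies the robust condition. -/

import Mathlib

set_option maxHeartbeats 1000000

open MeasureTheory

private lemma pi_map_eval' {X : Type*} [MeasurableSpace X] (μ : Measure X)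
    [IsProbabilityMeasure μ] (K : ℕ) (k : Fin K) :
    (Measure.pi fun _ : Fin K => μ).map (Function.eval k) = μ := by
  ext s hs
  rw [Measure.map_apply (measurable_pi_apply k) hs, Set.eval_preimage,
    Measure.pi_pi]
  simp only [Function.update, eq_rec_constant, dif_eq_if, apply_ite μ, measure_univ]
  rw [Finset.prod_ite_eq' Finset.univ k (fun _ => μ s)]
  simp

private lemma integrable_of_bdd' {α : Type*} [MeasurableSpace α] (ν : Measure α)
    [IsFiniteMeasure ν] {g : α → ℝ} (hg : Measurable g) {C : ℝ}
    (hC : ∀ a, |g a| ≤ C) : Integrable g ν :=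
  Integrable.mono' (integrable_const C) hg.aestronglyMeasurable
    (Filter.Eventually.of_forall fun a => by simpa using hC a)

/-- RINCE with λ = 1/(K+1) satisfies the robust condition: for every bounded
measurable representation f, the additional risk of the RINCE loss vanishes. -/
theorem rince_additional_risk_vanishes
    {X : Type*} [MeasurableSpace X] (μ : Measure X) [IsProbabilityMeasure μ]
    (d : ℕ) (hd : 1 ≤ d)
    (K : ℕ) (hK : 1 ≤ K)
    (lam : ℝ) (hlam : lam = 1 / ((K : ℝ) + 1)) :
    ∀ f : X → EuclideanSpace ℝ (Fin d), Measurable f →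
      (∃ B : ℝ, ∀ x, ‖f x‖ ≤ B) →
      ∫ p : X × X × (Fin K → X),
          (-(1 - lam) * Real.exp ((inner ℝ (f p.1) (f p.2.1) : ℝ))
            + lam * ∑ k, Real.exp ((inner ℝ (f p.1) (f (p.2.2 k)) : ℝ)))
          ∂(μ.prod (μ.prod (Measure.pi fun _ : Fin K => μ)))
        = 0 := by
  rintro f hf ⟨B, hB⟩
  set π : Measure (Fin K → X) := Measure.pi fun _ : Fin K => μ with hπ
  have hπp : IsProbabilityMeasure π := by rw [hπ]; infer_instance
  -- the pairwise exponential similarity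
  set g : X → X → ℝ := fun x y => Real.exp ((inner ℝ (f x) (f y) : ℝ)) with hg
  set C : ℝ := Real.exp (|B| * |B|) with hC
  have hgmeas : Measurable (fun q : X × X => g q.1 q.2) := by
    apply Real.measurable_exp.comp
    exact (hf.comp measurable_fst).inner (hf.comp measurable_snd)
  have hgbd : ∀ x y, |g x y| ≤ C := by
    intro x y
    rw [hg, hC, abs_of_pos (Real.exp_pos _)]
    apply Real.exp_le_exp.2
    calc (inner ℝ (f x) (f y) : ℝ) ≤ ‖f x‖ * ‖f y‖ := real_inner_le_norm _ _
      _ ≤ |B| * |B| := by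
          apply mul_le_mul ((hB x).trans (le_abs_self B))
            ((hB y).trans (le_abs_self B)) (norm_nonneg _) (abs_nonneg _)
  have hCpos : 0 < C := Real.exp_pos _
  -- the common value of each pairwise integral
  have hmapfst : (μ.prod π).map Prod.fst = μ := by
    rw [Measure.map_fst_prod, measure_univ, one_smul]
  have hmapeval : ∀ k : Fin K, (μ.prod π).map (fun q => q.2 k) = μ := by
    intro k
    have : (fun q : X × (Fin K → X) => q.2 k)
        = (Function.eval k) ∘ Prod.snd := rfl
    rw [this, ← Measure.map_map (measurable_pi_apply k) measurable_snd,
      Measure.map_snd_prod, measure_univ, one_smul, hπ, pi_map_eval' μ K k]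
  -- inner integral vanishes for each x
  have hinner : ∀ x : X,
      ∫ q : X × (Fin K → X),
        (-(1 - lam) * g x q.1 + lam * ∑ k, g x (q.2 k)) ∂(μ.prod π) = 0 := by
    intro x
    have hmx : Measurable (g x) := by
      apply Real.measurable_exp.comp
      exact measurable_const.inner hf
    have h1 : Integrable (fun q : X × (Fin K → X) => -(1 - lam) * g x q.1)
        (μ.prod π) := by
      apply integrable_of_bdd' _ (measurable_const.mul (hmx.comp measurable_fst))
        (C := |1 - lam| * C)
      intro q; show |-(1 - lam) * g x q.1| ≤ _; rw [abs_mul, abs_neg]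
      exact mul_le_mul_of_nonneg_left (hgbd x q.1) (abs_nonneg _)
    have h2 : ∀ k : Fin K, Integrable (fun q : X × (Fin K → X) => g x (q.2 k))
        (μ.prod π) := by
      intro k
      exact integrable_of_bdd' _ (hmx.comp ((measurable_pi_apply k).comp measurable_snd))
        (fun q => hgbd x _)
    have h2' : Integrable (fun q : X × (Fin K → X) => lam * ∑ k, g x (q.2 k))
        (μ.prod π) := by
      exact ((integrable_finset_sum Finset.univ fun k _ => h2 k).const_mul lam)
    rw [integral_add h1 h2', integral_const_mul, integral_const_mul,
      integral_finset_sum Finset.univ fun k _ => h2 k]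
    have e1 : ∫ q : X × (Fin K → X), g x q.1 ∂(μ.prod π) = ∫ y, g x y ∂μ := by
      have hsm : AEStronglyMeasurable (g x) ((μ.prod π).map Prod.fst) := by
        rw [hmapfst]; exact hmx.aestronglyMeasurable
      have h := integral_map (μ := μ.prod π) measurable_fst.aemeasurable hsm
      rw [hmapfst] at h
      exact h.symm
    have e2 : ∀ k : Fin K,
        ∫ q : X × (Fin K → X), g x (q.2 k) ∂(μ.prod π) = ∫ y, g x y ∂μ := by
      intro k
      have hsm : AEStronglyMeasurable (g x)
          ((μ.prod π).map (fun q => q.2 k)) := by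
        rw [hmapeval k]; exact hmx.aestronglyMeasurable
      have hm : Measurable (fun q : X × (Fin K → X) => q.2 k) :=
        (measurable_pi_apply k).comp measurable_snd
      have h := integral_map (μ := μ.prod π) hm.aemeasurable hsm
      rw [hmapeval k] at h
      exact h.symm
    rw [e1]
    rw [Finset.sum_congr rfl fun k _ => e2 k, Finset.sum_const, Finset.card_univ,
      Fintype.card_fin, nsmul_eq_mul]
    have hlamK : lam * (K : ℝ) = 1 - lam := by
      have hK1 : (K : ℝ) + 1 ≠ 0 := by positivity
      rw [hlam]; field_simp; ring
    set I := ∫ y, g x y ∂μ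
    calc -(1 - lam) * I + lam * ((K : ℝ) * I)
        = (lam * (K : ℝ) - (1 - lam)) * I := by ring
      _ = 0 := by rw [hlamK]; ring
  -- integrability of the full integrand
  have hg1 : Measurable (fun p : X × X × (Fin K → X) => g p.1 p.2.1) :=
    Real.measurable_exp.comp
      ((hf.comp measurable_fst).inner (hf.comp (measurable_fst.comp measurable_snd)))
  have hg2 : ∀ k : Fin K,
      Measurable (fun p : X × X × (Fin K → X) => g p.1 (p.2.2 k)) := fun k =>
    Real.measurable_exp.comp
      ((hf.comp measurable_fst).inner
        (hf.comp ((measurable_pi_apply k).comp (measurable_snd.comp measurable_snd))))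
  have hFmeas : Measurable (fun p : X × X × (Fin K → X) =>
      -(1 - lam) * g p.1 p.2.1 + lam * ∑ k, g p.1 (p.2.2 k)) :=
    (measurable_const.mul hg1).add
      (measurable_const.mul (Finset.measurable_sum Finset.univ fun k _ => hg2 k))
  have hFint : Integrable (fun p : X × X × (Fin K → X) =>
      -(1 - lam) * g p.1 p.2.1 + lam * ∑ k, g p.1 (p.2.2 k))
      (μ.prod (μ.prod π)) := by
    apply integrable_of_bdd' _ hFmeas (C := |1 - lam| * C + |lam| * ((K : ℝ) * C))
    intro p
    apply (abs_add_le _ _).trans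
    apply add_le_add
    · rw [abs_mul, abs_neg]
      exact mul_le_mul_of_nonneg_left (hgbd _ _) (abs_nonneg _)
    · rw [abs_mul]
      apply mul_le_mul_of_nonneg_left _ (abs_nonneg _)
      apply (Finset.abs_sum_le_sum_abs _ _).trans
      calc ∑ k : Fin K, |g p.1 (p.2.2 k)| ≤ ∑ k : Fin K, C :=
            Finset.sum_le_sum fun k _ => hgbd _ _
        _ = (K : ℝ) * C := by simp [mul_comm]
  rw [integral_prod _ hFint]
  simp only [hinner]
  simp
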